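/- A connected simple graph G with at least two vertices admits a strong conflict-free vertex-connection 2-coloring if and only if G is a complete bipartite graph (its vertex set can be partitioned into two nonempty independent sets A and B such that every vertex of A is adjacent to every vertex of B). -/

import Mathlib

open SimpleGraph

/-- `f` is a strong conflict-free vertex-connection coloring of `G`: any two distinct
vertices are joined by a shortest path on which some color occurs exactly once. -/
def IsSCFVC {V α : Type*} [DecidableEq α] (G : SimpleGraph V) (f : V → α) : Prop :=
  ∀ u v : V, u ≠ v → ∃ p : G.Walk u v, p.length = G.dist u v ∧
    ∃ c : α, (p.support.map f).count c = 1

private lemma fin2_aux : ∀ x y : Fin 2, x ≠ y → y = x + 1 := by decide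

private lemma fin2_add_add (x : Fin 2) : x + 1 + 1 = x := by revert x; decide

open Fin.NatCast in
private lemma alt_counts {V : Type*} {G : SimpleGraph V} {f : V → Fin 2}
    (hf : ∀ a b, G.Adj a b → f a ≠ f b) :
    ∀ {u v : V} (p : G.Walk u v),
      (p.support.map f).count (f u) = (p.length + 2) / 2 ∧
      (p.support.map f).count (f u + 1) = (p.length + 1) / 2 ∧
      f v = f u + (p.length : Fin 2) := by
  intro u v p
  induction p with
  | nil =>
    refine ⟨by simp, ?_, by simp⟩
    have : f u + 1 ≠ f u := by
      have := fin2_add_add (f u); intro h; rw [h] at this; simp at this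
    simp [List.count_cons, this]
  | @cons a b c h q ih =>
    have hb : f b = f a + 1 := fin2_aux _ _ (hf _ _ h)
    obtain ⟨h1, h2, h3⟩ := ih
    have hbb : f b + 1 = f a := by rw [hb, fin2_add_add]
    have hne : f a + 1 ≠ f a := by
      have := fin2_add_add (f a); intro hh; rw [hh] at this; simp at this
    have hne' : f a ≠ f a + 1 := fun hh => hne hh.symm
    have h2' : ((q.support.map f).count (f a)) = (q.length + 1) / 2 := by
      rw [← hbb]; exact h2
    have h1' : ((q.support.map f).count (f a + 1)) = (q.length + 2) / 2 := by
      rw [← hb]; exact h1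
    refine ⟨?_, ?_, ?_⟩
    · rw [Walk.support_cons, List.map_cons, List.count_cons, h2']
      simp only [Walk.length_cons, beq_self_eq_true, if_true]
      omega
    · rw [Walk.support_cons, List.map_cons, List.count_cons, h1']
      have hb2 : (f a == f a + 1) = false := by simp [hne']
      simp only [Walk.length_cons, hb2, Bool.false_eq_true, if_false]
      omega
    · rw [h3, hb, Walk.length_cons, Nat.cast_add, Nat.cast_one]
      rw [add_assoc, add_comm (1 : Fin 2)]

/-- A connected graph on at least two vertices has a strong conflict-free vertex-connection
`2`-coloring iff it is complete bipartite. -/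
theorem stmt3 {V : Type*} [Fintype V] (G : SimpleGraph V) (hG : G.Connected)
    (hcard : 2 ≤ Fintype.card V) :
    (∃ f : V → Fin 2, IsSCFVC G f) ↔
    ∃ A B : Set V, A.Nonempty ∧ B.Nonempty ∧ A ∩ B = ∅ ∧ A ∪ B = Set.univ ∧
      (∀ u ∈ A, ∀ v ∈ A, ¬ G.Adj u v) ∧ (∀ u ∈ B, ∀ v ∈ B, ¬ G.Adj u v) ∧
      (∀ u ∈ A, ∀ v ∈ B, G.Adj u v) := by
  constructor
  · rintro ⟨f, hf⟩
    -- f is a proper coloring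
    have hproper : ∀ a b, G.Adj a b → f a ≠ f b := by
      intro a b hab heq
      obtain ⟨p, hlen, c, hc⟩ := hf a b hab.ne
      rw [dist_eq_one_iff_adj.mpr hab] at hlen
      -- p has length 1, so support = [a, b]
      cases p with
      | nil => simp at hlen
      | cons h q =>
        cases q with
        | nil =>
          simp only [Walk.support_cons, Walk.support_nil, List.map_cons, List.map_nil,
            List.count_cons, List.count_nil] at hc
          rw [← heq] at hc
          rcases eq_or_ne c (f a) with rfl | hne
          · simp at hc
          · simp [Ne.symm hne] at hc
        | cons h' q' => simp [Walk.length_cons] at hlen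
    -- there exist adjacent vertices
    obtain ⟨x, y, hxy⟩ : ∃ x y, G.Adj x y := by
      obtain ⟨x, y, hne⟩ := Fintype.exists_pair_of_one_lt_card hcard
      obtain ⟨p⟩ := hG x y
      cases p with
      | nil => exact absurd rfl hne
      | cons h q => exact ⟨_, _, h⟩
    refine ⟨{v | f v = f x}, {v | f v = f x + 1}, ⟨x, rfl⟩,
      ⟨y, fin2_aux _ _ (hproper _ _ hxy)⟩, ?_, ?_, ?_, ?_, ?_⟩
    · ext v
      simp only [Set.mem_inter_iff, Set.mem_setOf_eq, Set.mem_empty_iff_false, iff_false]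
      rintro ⟨h1, h2⟩
      rw [h1] at h2
      have := fin2_add_add (f x); rw [← h2] at this; simp at this
    · ext v
      simp only [Set.mem_union, Set.mem_setOf_eq, Set.mem_univ, iff_true]
      rcases eq_or_ne (f v) (f x) with h | h
      · exact Or.inl h
      · exact Or.inr (fin2_aux _ _ fun hh => h hh.symm)
    · intro u hu v hv hadj
      exact hproper _ _ hadj (by rw [Set.mem_setOf_eq] at hu hv; rw [hu, hv])
    · intro u hu v hv hadj
      exact hproper _ _ hadj (by rw [Set.mem_setOf_eq] at hu hv; rw [hu, hv])
    · intro u hu v hv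
      rw [Set.mem_setOf_eq] at hu hv
      have hne : u ≠ v := by
        rintro rfl
        rw [hu] at hv
        have := fin2_add_add (f x); rw [← hv] at this; simp at this
      by_contra hadj
      obtain ⟨p, hlen, c, hc⟩ := hf u v hne
      -- dist ≥ 2
      have hd1 : G.dist u v ≠ 1 := fun h => hadj (dist_eq_one_iff_adj.mp h)
      have hd0 : 0 < G.dist u v := hG.pos_dist_of_ne hne
      have hL2 : 2 ≤ p.length := by omega
      obtain ⟨h1, h2, h3⟩ := alt_counts hproper p
      -- f u ≠ f v forces odd length
      have hfne : f u ≠ f v := by rw [hu, hv]; intro hh; exact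
        (by have := fin2_add_add (f x); rw [← hh] at this; simp at this)
      have hodd : ¬ (2 ∣ p.length) := by
        intro ⟨k, hk⟩
        apply hfne
        rw [h3, hk]
        push_cast
        simp [mul_comm]
      have hL3 : 3 ≤ p.length := by omega
      rcases eq_or_ne c (f u) with rfl | hcn
      · rw [h1] at hc; omega
      · have : c = f u + 1 := fin2_aux _ _ fun hh => hcn hh.symm
        rw [this, h2] at hc; omega
  · rintro ⟨A, B, hA, hB, hdisj, huniv, hAA, hBB, hAB⟩
    classical
    refine ⟨fun v => if v ∈ A then 0 else 1, ?_⟩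
    intro u v hne
    have hmem : ∀ w : V, w ∈ A ∨ w ∈ B := fun w => by
      have : w ∈ A ∪ B := huniv ▸ Set.mem_univ w
      exact this
    have hnotboth : ∀ w : V, w ∈ A → w ∉ B := fun w h1 h2 => by
      have : w ∈ A ∩ B := ⟨h1, h2⟩
      rw [hdisj] at this; exact this
    by_cases hadj : G.Adj u v
    · refine ⟨Walk.cons hadj Walk.nil, ?_, ?_⟩
      · simp [dist_eq_one_iff_adj.mpr hadj]
      · -- u, v in different parts
        have hdif : (u ∈ A ∧ v ∉ A) ∨ (u ∉ A ∧ v ∈ A) := by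
          rcases hmem u with hu | hu <;> rcases hmem v with hv | hv
          · exact absurd hadj (hAA u hu v hv)
          · exact Or.inl ⟨hu, fun h => hnotboth v h hv⟩
          · exact Or.inr ⟨fun h => hnotboth u h hu, hv⟩
          · exact absurd hadj (hBB u hu v hv)
        refine ⟨0, ?_⟩
        rcases hdif with ⟨h1, h2⟩ | ⟨h1, h2⟩ <;>
          simp [Walk.support_cons, List.count_cons, h1, h2]
    · -- u, v in the same part; go through a vertex of the other part
      have hsame : (u ∈ A ∧ v ∈ A) ∨ (u ∈ B ∧ v ∈ B) := by
        rcases hmem u with hu | hu <;> rcases hmem v with hv | hv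
        · exact Or.inl ⟨hu, hv⟩
        · exact absurd (hAB u hu v hv) hadj
        · exact absurd ((hAB v hv u hu).symm) hadj
        · exact Or.inr ⟨hu, hv⟩
      obtain ⟨w, hw1, hw2, hwu, hwv⟩ : ∃ w, G.Adj u w ∧ G.Adj w v ∧
          (u ∈ A ↔ w ∉ A) ∧ (v ∈ A ↔ w ∉ A) := by
        rcases hsame with ⟨hu, hv⟩ | ⟨hu, hv⟩
        · obtain ⟨b, hb⟩ := hB
          exact ⟨b, hAB u hu b hb, (hAB v hv b hb).symm,
            ⟨fun _ h => hnotboth b h hb, fun _ => hu⟩,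
            ⟨fun _ h => hnotboth b h hb, fun _ => hv⟩⟩
        · obtain ⟨a, ha⟩ := hA
          have hunA : u ∉ A := fun h => hnotboth u h hu
          have hvnA : v ∉ A := fun h => hnotboth v h hv
          exact ⟨a, (hAB a ha u hu).symm, hAB a ha v hv,
            ⟨fun h => absurd h hunA, fun h => absurd ha h⟩,
            ⟨fun h => absurd h hvnA, fun h => absurd ha h⟩⟩
      refine ⟨Walk.cons hw1 (Walk.cons hw2 Walk.nil), ?_, ?_⟩
      · have hle : G.dist u v ≤ 2 := by
          have := dist_le (Walk.cons hw1 (Walk.cons hw2 Walk.nil))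
          simpa using this
        have hd1 : G.dist u v ≠ 1 := fun h => hadj (dist_eq_one_iff_adj.mp h)
        have hd0 : 0 < G.dist u v := hG.pos_dist_of_ne hne
        simp only [Walk.length_cons, Walk.length_nil]
        omega
      · refine ⟨if w ∈ A then 0 else 1, ?_⟩
        by_cases hwA : w ∈ A
        · have h1 : u ∉ A := fun h => (hwu.mp h) hwA
          have h2 : v ∉ A := fun h => (hwv.mp h) hwA
          simp [Walk.support_cons, List.count_cons, h1, h2, hwA]
        · have h1 : u ∈ A := by
            rcases hmem u with h | h
            · exact h
            · exfalso
              rcases hmem w with h' | h'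
              · exact hwA h'
              · rcases hsame with ⟨hu, _⟩ | _
                · exact hnotboth u hu h
                · exact hnotboth u (hwu.mpr hwA) h
          have h2 : v ∈ A := hwv.mpr hwA
          simp [Walk.support_cons, List.count_cons, h1, h2, hwA]
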